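/- The formal Laurent series L₁ = q⁻²·∏_{n≥1}(1-q^{9n})⁴(1-q^{3n})⁻¹(1-q^{27n})⁻³ is supported on exponents congruent to 1 modulo 3, i.e., L₁ = ∑ b(n)q^{3n+1} for some integers b(n). -/

import Mathlib

open PowerSeries Finset

/-- Partial product `∏_{n=1}^{N} (1-q^{9n})⁴(1-q^{3n})⁻¹(1-q^{27n})⁻³` over `ℤ`. -/
noncomputable def L1partial (N : ℕ) : PowerSeries ℤ :=
  ∏ n ∈ range N,
    ((1 - X ^ (9 * (n + 1))) ^ 4 * invOfUnit (1 - X ^ (3 * (n + 1))) 1 *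
      (invOfUnit (1 - X ^ (27 * (n + 1))) 1) ^ 3)

/-- `L1coeff n` is the `n`-th coefficient of the formal Laurent series
`L₁ = q⁻² ∏_{n≥1}(1-q^{9n})⁴(1-q^{3n})⁻¹(1-q^{27n})⁻³`; in particular the
coefficients of `L₁` are integers. -/
noncomputable def L1coeff (n : ℤ) : ℤ :=
  if 0 ≤ n + 2 then coeff (n + 2).toNat (L1partial ((n + 2).toNat + 1)) else 0


/-- `L₁` is supported on exponents `≡ 1 (mod 3)`. -/

def P3 (f : PowerSeries ℤ) : Prop := ∀ m : ℕ, ¬ (3 ∣ m) → coeff m f = 0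

lemma P3_one : P3 1 := by
  intro m hm
  rw [coeff_one, if_neg]
  rintro rfl; exact hm ⟨0, rfl⟩

lemma P3_mul {f g : PowerSeries ℤ} (hf : P3 f) (hg : P3 g) : P3 (f * g) := by
  intro m hm
  rw [coeff_mul]
  apply Finset.sum_eq_zero
  intro p hp
  rw [Finset.HasAntidiagonal.mem_antidiagonal] at hp
  by_cases h1 : 3 ∣ p.1
  · have : ¬ 3 ∣ p.2 := by omega
    rw [hg p.2 this, mul_zero]
  · rw [hf p.1 h1, zero_mul]

lemma P3_pow {f : PowerSeries ℤ} (hf : P3 f) (k : ℕ) : P3 (f ^ k) := by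
  induction k with
  | zero => simpa using P3_one
  | succ n ih => rw [pow_succ]; exact P3_mul ih hf

lemma P3_one_sub_Xpow (k : ℕ) (hk : 3 ∣ k) : P3 (1 - X ^ k : PowerSeries ℤ) := by
  intro m hm
  rw [map_sub, coeff_X_pow, P3_one m hm, if_neg, sub_zero]
  rintro rfl; exact hm hk

lemma P3_inv {f : PowerSeries ℤ} (hf : P3 f) (h0 : constantCoeff f = 1) :
    P3 (invOfUnit f 1) := by
  intro m
  induction m using Nat.strong_induction_on with
  | _ m ih =>
  intro hm
  have hmul : f * invOfUnit f 1 = 1 := f.mul_invOfUnit 1 (by simp [h0])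
  have hm0 : m ≠ 0 := by rintro rfl; exact hm ⟨0, rfl⟩
  have hc := congrArg (coeff m) hmul
  rw [coeff_mul, coeff_one, if_neg hm0] at hc
  have hsum : ∑ p ∈ antidiagonal m, coeff p.1 f * coeff p.2 (invOfUnit f 1)
      = coeff m (invOfUnit f 1) := by
    rw [Finset.sum_eq_single (0, m)]
    · simp [coeff_zero_eq_constantCoeff, h0]
    · intro p hp hne
      rw [Finset.HasAntidiagonal.mem_antidiagonal] at hp
      by_cases h1 : 3 ∣ p.1
      · have h2 : ¬ 3 ∣ p.2 := by omega
        have hlt : p.2 < m := by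
          rcases Nat.eq_zero_or_pos p.1 with h | h
          · exact absurd (Prod.ext h (by omega)) hne
          · omega
        rw [ih p.2 hlt h2, mul_zero]
      · rw [hf p.1 h1, zero_mul]
    · intro h; exact absurd (Finset.HasAntidiagonal.mem_antidiagonal.mpr (by simp)) h
  rw [hsum] at hc
  exact hc

lemma P3_L1partial (N : ℕ) : P3 (L1partial N) := by
  apply Finset.prod_induction _ P3 (fun _ _ => P3_mul) P3_one
  intro n _
  refine P3_mul (P3_mul (P3_pow (P3_one_sub_Xpow _ ⟨3 * (n+1), by ring⟩) 4) ?_)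
    (P3_pow ?_ 3)
  · exact P3_inv (P3_one_sub_Xpow _ ⟨n + 1, rfl⟩) (by simp)
  · exact P3_inv (P3_one_sub_Xpow _ ⟨9 * (n+1), by ring⟩) (by simp)

theorem L1_support : ∀ n : ℤ, ¬ n ≡ 1 [ZMOD 3] → L1coeff n = 0 := by
  intro n hn
  unfold L1coeff
  split_ifs with h
  · apply P3_L1partial
    intro hd
    apply hn
    have : (3 : ℤ) ∣ n + 2 := by
      rcases hd with ⟨k, hk⟩
      exact ⟨k, by omega⟩
    change n % 3 = 1 % 3
    omega
  · rfl
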